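/- If X and Y are double suits, then X +_J Y and C_{n,J}(X) are double suits: in particular (X +_J Y)⁺ ∩ (X +_J Y)⁻ = {∅} and C_{n,J}(X)⁺ ∩ C_{n,J}(X)⁻ = {∅}. -/

import Mathlib

/-- Two valuations agree outside `J`: they take the same values on all coordinates not in `J`. -/
def AgreeOutside {ι A : Type*} (J : Set ι) (a b : ι → A) : Prop :=
  ∀ i, i ∉ J → a i = b i

/-- `𝒰` is a `J`-saturated disjoint cover of `V`. -/
def IsSatDisjCover {ι A : Type*} (J : Set ι) (V : Set (ι → A))
    (𝒰 : Set (Set (ι → A))) : Prop :=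
  ⋃₀ 𝒰 = V ∧ 𝒰.Pairwise Disjoint ∧
    ∀ a ∈ V, ∀ b ∈ V, AgreeOutside J a b → ∀ U ∈ 𝒰, a ∈ U → b ∈ U

/-- `V = V₁ ∪_J V₂`: a `J`-saturated disjoint (binary) cover of `V`. -/
def UnionJ {ι A : Type*} (J : Set ι) (V V₁ V₂ : Set (ι → A)) : Prop :=
  V₁ ∪ V₂ = V ∧ Disjoint V₁ V₂ ∧
    ∀ a ∈ V, ∀ b ∈ V, AgreeOutside J a b →
      ((a ∈ V₁ → b ∈ V₁) ∧ (a ∈ V₂ → b ∈ V₂))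

/-- `f : V → A` is independent of `J`. -/
def IndepOf {ι A : Type*} (J : Set ι) (V : Set (ι → A)) (f : (ι → A) → A) : Prop :=
  ∀ a ∈ V, ∀ b ∈ V, AgreeOutside J a b → f a = f b

/-- `V(n:f) = { ⃗a(n : f ⃗a) : ⃗a ∈ V }`. -/
def teamUpd {ι A : Type*} [DecidableEq ι] (n : ι) (f : (ι → A) → A)
    (V : Set (ι → A)) : Set (ι → A) :=
  (fun a => Function.update a n (f a)) '' V

/-- `V(n:A) = { ⃗a(n : c) : ⃗a ∈ V, c ∈ A }`. -/
def teamExp {ι A : Type*} [DecidableEq ι] (n : ι) (V : Set (ι → A)) : Set (ι → A) :=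
  {x | ∃ a ∈ V, ∃ c : A, x = Function.update a n c}

/-- An element of an IFG cylindric power set algebra: a pair `⟨X⁺, X⁻⟩` of sets of teams. -/
abbrev IFGElem (ι A : Type*) := Set (Set (ι → A)) × Set (Set (ι → A))

/-- Negation: `∼⟨X⁺, X⁻⟩ = ⟨X⁻, X⁺⟩`. -/
def ifgNeg {ι A : Type*} (X : IFGElem ι A) : IFGElem ι A := (X.2, X.1)

/-- `{V : V = V₁ ∪_J V₂ for some V₁ ∈ S, V₂ ∈ T}`. -/
def plusPos {ι A : Type*} (J : Set ι) (S T : Set (Set (ι → A))) : Set (Set (ι → A)) :=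
  {V | ∃ V₁ ∈ S, ∃ V₂ ∈ T, UnionJ J V V₁ V₂}

/-- The operation `X +_J Y`. -/
def ifgPlus {ι A : Type*} (J : Set ι) (X Y : IFGElem ι A) : IFGElem ι A :=
  (plusPos J X.1 Y.1, X.2 ∩ Y.2)

/-- The operation `X ·_J Y`. -/
def ifgTimes {ι A : Type*} (J : Set ι) (X Y : IFGElem ι A) : IFGElem ι A :=
  (X.1 ∩ Y.1, plusPos J X.2 Y.2)

/-- The cylindrification `C_{n,J}(X)`. -/
def ifgCyl {ι A : Type*} [DecidableEq ι] (n : ι) (J : Set ι) (X : IFGElem ι A) :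
    IFGElem ι A :=
  ({V | ∃ f, IndepOf J V f ∧ teamUpd n f V ∈ X.1}, {W | teamExp n W ∈ X.2})

/-- The constant `0`. -/
def ifgZero {ι A : Type*} : IFGElem ι A := ({∅}, Set.univ)

/-- The constant `1`. -/
def ifgOne {ι A : Type*} : IFGElem ι A := (Set.univ, {∅})

/-- The diagonal element `D_{ij}`. -/
def ifgD {ι A : Type*} (i j : ι) : IFGElem ι A :=
  ({V | ∀ a ∈ V, a i = a j}, {V | ∀ a ∈ V, a i ≠ a j})

/-- A suit: a nonempty collection of teams closed under subsets. -/
def IsSuit {ι A : Type*} (S : Set (Set (ι → A))) : Prop :=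
  S.Nonempty ∧ ∀ V ∈ S, ∀ V' ⊆ V, V' ∈ S

/-- A pair of suits. -/
def IsPairOfSuits {ι A : Type*} (X : IFGElem ι A) : Prop :=
  IsSuit X.1 ∧ IsSuit X.2

/-- A double suit: a pair of suits with `X⁺ ∩ X⁻ = {∅}`. -/
def IsDoubleSuit {ι A : Type*} (X : IFGElem ι A) : Prop :=
  IsPairOfSuits X ∧ X.1 ∩ X.2 = {∅}


lemma suit_empty_mem {ι A : Type*} {S : Set (Set (ι → A))} (h : IsSuit S) : ∅ ∈ S := by
  obtain ⟨⟨V, hV⟩, hcl⟩ := h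
  exact hcl V hV ∅ (Set.empty_subset V)

lemma unionJ_empty {ι A : Type*} (J : Set ι) :
    UnionJ J (∅ : Set (ι → A)) ∅ ∅ := by
  refine ⟨by simp, by simp, ?_⟩
  intro a ha; exact absurd ha (Set.notMem_empty a)

lemma unionJ_subset {ι A : Type*} {J : Set ι} {V V₁ V₂ V' : Set (ι → A)}
    (h : UnionJ J V V₁ V₂) (hV' : V' ⊆ V) :
    UnionJ J V' (V₁ ∩ V') (V₂ ∩ V') := by
  obtain ⟨hu, hd, hs⟩ := h
  refine ⟨?_, ?_, ?_⟩
  · rw [← Set.union_inter_distrib_right, hu, Set.inter_eq_right.mpr hV']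
  · exact (hd.mono (Set.inter_subset_left) (Set.inter_subset_left))
  · intro a ha b hb hab
    obtain ⟨h1, h2⟩ := hs a (hV' ha) b (hV' hb) hab
    exact ⟨fun h => ⟨h1 h.1, hb⟩, fun h => ⟨h2 h.1, hb⟩⟩

lemma teamUpd_subset_teamExp {ι A : Type*} [DecidableEq ι] (n : ι)
    (f : (ι → A) → A) (V : Set (ι → A)) : teamUpd n f V ⊆ teamExp n V := by
  rintro x ⟨a, ha, rfl⟩
  exact ⟨a, ha, f a, rfl⟩

/-- Sums and cylindrifications of double suits are double suits; in particular
`(X +_J Y)⁺ ∩ (X +_J Y)⁻ = {∅}` and `C_{n,J}(X)⁺ ∩ C_{n,J}(X)⁻ = {∅}`. -/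
theorem doubleSuit_plus_cyl {ι A : Type*} [DecidableEq ι] (J : Set ι) (n : ι)
    (X Y : IFGElem ι A) (hX : IsDoubleSuit X) (hY : IsDoubleSuit Y) :
    IsDoubleSuit (ifgPlus J X Y) ∧ IsDoubleSuit (ifgCyl n J X) ∧
    (ifgPlus J X Y).1 ∩ (ifgPlus J X Y).2 = {∅} ∧
    (ifgCyl n J X).1 ∩ (ifgCyl n J X).2 = {∅} := by
  obtain ⟨⟨hX1, hX2⟩, hXd⟩ := hX
  obtain ⟨⟨hY1, hY2⟩, hYd⟩ := hY
  have hplus : (ifgPlus J X Y).1 ∩ (ifgPlus J X Y).2 = {∅} := by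
    apply Set.eq_singleton_iff_unique_mem.mpr
    constructor
    · exact ⟨⟨∅, suit_empty_mem hX1, ∅, suit_empty_mem hY1, by
        simpa using unionJ_empty (A := A) J⟩,
        suit_empty_mem hX2, suit_empty_mem hY2⟩
    · rintro V ⟨⟨V₁, hV₁, V₂, hV₂, hu⟩, hVn⟩
      have hsub := hu.1
      have h1 : V₁ = ∅ := by
        have : V₁ ∈ X.1 ∩ X.2 := ⟨hV₁, hX2.2 V hVn.1 V₁ (hsub ▸ Set.subset_union_left)⟩
        simpa [hXd] using this
      have h2 : V₂ = ∅ := by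
        have : V₂ ∈ Y.1 ∩ Y.2 := ⟨hV₂, hY2.2 V hVn.2 V₂ (hsub ▸ Set.subset_union_right)⟩
        simpa [hYd] using this
      rw [← hsub, h1, h2, Set.empty_union]
  have hcyl : (ifgCyl n J X).1 ∩ (ifgCyl n J X).2 = {∅} := by
    apply Set.eq_singleton_iff_unique_mem.mpr
    constructor
    · refine ⟨⟨fun b => b n, fun a ha => absurd ha (Set.notMem_empty a), ?_⟩, ?_⟩
      · simpa [teamUpd] using suit_empty_mem hX1
      · have : teamExp n (∅ : Set (ι → A)) = ∅ := by
          ext x; simp [teamExp]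
        simpa [ifgCyl, this] using suit_empty_mem hX2
    · rintro V ⟨⟨f, hf, hfV⟩, hVn⟩
      have : teamUpd n f V ∈ X.1 ∩ X.2 :=
        ⟨hfV, hX2.2 _ hVn _ (teamUpd_subset_teamExp n f V)⟩
      have hte : teamUpd n f V = ∅ := by simpa [hXd] using this
      by_contra hne
      obtain ⟨a, ha⟩ := Set.nonempty_iff_ne_empty.mpr hne
      exact absurd (hte ▸ ⟨a, ha, rfl⟩ : Function.update a n (f a) ∈ (∅ : Set (ι → A))) (Set.notMem_empty _)
  refine ⟨⟨⟨?_, ?_⟩, hplus⟩, ⟨⟨?_, ?_⟩, hcyl⟩, hplus, hcyl⟩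
  · -- plusPos is a suit
    constructor
    · exact ⟨∅, ∅, suit_empty_mem hX1, ∅, suit_empty_mem hY1, by
        simpa using unionJ_empty (A := A) J⟩
    · rintro V ⟨V₁, hV₁, V₂, hV₂, hu⟩ V' hV'
      exact ⟨V₁ ∩ V', hX1.2 V₁ hV₁ _ Set.inter_subset_left,
        V₂ ∩ V', hY1.2 V₂ hV₂ _ Set.inter_subset_left, unionJ_subset hu hV'⟩
  · -- X.2 ∩ Y.2 is a suit
    exact ⟨⟨∅, suit_empty_mem hX2, suit_empty_mem hY2⟩,
      fun V hV V' h => ⟨hX2.2 V hV.1 V' h, hY2.2 V hV.2 V' h⟩⟩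
  · -- cyl pos is a suit
    constructor
    · refine ⟨∅, fun b => b n, fun a ha => absurd ha (Set.notMem_empty a), ?_⟩
      simpa [teamUpd] using suit_empty_mem hX1
    · rintro V ⟨f, hf, hfV⟩ V' hV'
      refine ⟨f, fun a ha b hb hab => hf a (hV' ha) b (hV' hb) hab, ?_⟩
      exact hX1.2 _ hfV _ (Set.image_mono hV')
  · -- cyl neg is a suit
    constructor
    · have : teamExp n (∅ : Set (ι → A)) = ∅ := by ext x; simp [teamExp]
      exact ⟨∅, by simpa [ifgCyl, this] using suit_empty_mem hX2⟩
    · intro V hV V' hV'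
      refine hX2.2 _ hV _ ?_
      rintro x ⟨a, ha, c, rfl⟩
      exact ⟨a, hV' ha, c, rfl⟩
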